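/- For each r ≥ 1 there exists a sequence S_r over the nonzero vertices G_r^+ of the r-dimensional hypercube with |S_r| = F_{r+1}, |supp(S_r)| = r, supp(S_r) spanning ℚ^r, σ(S_r) = F_r·(e_1 + ⋯ + e_r), and such that no nonempty proper subsequence of S_r has sum in the subgroup generated by e_1 + ⋯ + e_r. -/

import Mathlib

/-- The set `G_r⁺` of nonzero vertices of the `r`-dimensional hypercube in `ℤ^r`,
i.e. the nonzero 0-1 vectors. -/
def hypercubePlus (r : ℕ) : Set (Fin r → ℤ) :=
  {g | g ≠ 0 ∧ ∀ i, g i = 0 ∨ g i = 1}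

namespace Stmt8Aux

open Multiset

/-- The extension map `g ↦ (1, 𝟙 - g)`. -/
def ext1 (n : ℕ) (g : Fin (n + 1) → ℤ) : Fin (n + 2) → ℤ :=
  Fin.cons 1 (fun i => 1 - g i)

/-- The vector `(0, 1, …, 1)`. -/
def v0 (n : ℕ) : Fin (n + 2) → ℤ := Fin.cons 0 (fun _ => 1)

/-- The recursive construction. -/
def Sseq : (n : ℕ) → Multiset (Fin (n + 1) → ℤ)
  | 0 => {fun _ => 1}
  | n + 1 => Multiset.replicate (Nat.fib (n + 1)) (v0 n) + (Sseq n).map (ext1 n)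

lemma Sseq_succ (n : ℕ) :
    Sseq (n + 1) = Multiset.replicate (Nat.fib (n + 1)) (v0 n) + (Sseq n).map (ext1 n) := rfl

lemma ext1_inj (n : ℕ) : Function.Injective (ext1 n) := by
  intro a b h
  funext i
  have := congrFun h i.succ
  simp only [ext1, Fin.cons_succ] at this
  omega

lemma retract_ext1 (n : ℕ) (g : Fin (n + 1) → ℤ) :
    (fun i : Fin (n + 1) => 1 - ext1 n g i.succ) = g := by
  funext i; simp [ext1]

lemma card_Sseq (n : ℕ) : Multiset.card (Sseq n) = Nat.fib (n + 2) := by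
  induction n with
  | zero => simp [Sseq]
  | succ n ih =>
    rw [Sseq_succ]
    simp only [Multiset.card_add, Multiset.card_replicate, Multiset.card_map, ih]
    rw [Nat.fib_add_two (n := n + 1)]

lemma sum_ext1_zero (n : ℕ) (U : Multiset (Fin (n + 1) → ℤ)) :
    ((U.map (ext1 n)).sum) 0 = (Multiset.card U : ℤ) := by
  rw [Pi.multiset_sum_apply, Multiset.map_map]
  have h : ((fun f : Fin (n + 2) → ℤ => f 0) ∘ ext1 n) = fun _ => (1 : ℤ) := by
    funext g; simp [ext1]
  rw [h, Multiset.map_const', Multiset.sum_replicate]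
  simp

lemma sum_ext1_succ (n : ℕ) (U : Multiset (Fin (n + 1) → ℤ)) (j : Fin (n + 1)) :
    ((U.map (ext1 n)).sum) j.succ = (Multiset.card U : ℤ) - (U.sum) j := by
  rw [Pi.multiset_sum_apply, Multiset.map_map]
  have h : ((fun f : Fin (n + 2) → ℤ => f j.succ) ∘ ext1 n)
      = fun g : Fin (n + 1) → ℤ => (1 : ℤ) - g j := by
    funext g; simp [ext1]
  rw [h, Multiset.sum_map_sub, Multiset.map_const', Multiset.sum_replicate,
    ← Pi.multiset_sum_apply]
  simp

lemma sum_Sseq (n : ℕ) : (Sseq n).sum = fun _ => (Nat.fib (n + 1) : ℤ) := by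
  induction n with
  | zero =>
    show ({fun _ => 1} : Multiset (Fin 1 → ℤ)).sum = _
    simp
  | succ n ih =>
    funext i
    rw [Sseq_succ, Multiset.sum_add, Pi.add_apply, Multiset.sum_replicate]
    refine Fin.cases ?_ (fun j => ?_) i
    · rw [sum_ext1_zero, card_Sseq]
      simp [v0]
    · rw [sum_ext1_succ, card_Sseq, ih]
      simp only [Pi.smul_apply, v0, Fin.cons_succ, smul_eq_mul, mul_one, nsmul_eq_mul]
      ring

lemma mem_Sseq {n : ℕ} {g : Fin (n + 1) → ℤ} (hg : g ∈ Sseq n) :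
    (∀ i, g i = 0 ∨ g i = 1) ∧ g ≠ 0 := by
  induction n with
  | zero =>
    rw [show Sseq 0 = ({fun _ => 1} : Multiset (Fin 1 → ℤ)) from rfl,
      Multiset.mem_singleton] at hg
    subst hg
    refine ⟨fun i => Or.inr rfl, fun h => ?_⟩
    have := congrFun h 0
    simp at this
  | succ n ih =>
    rw [Sseq_succ, Multiset.mem_add] at hg
    rcases hg with hg | hg
    · have := (Multiset.eq_of_mem_replicate hg)
      subst this
      constructor
      · intro i
        refine Fin.cases ?_ (fun j => ?_) i <;> simp [v0]
      · intro h
        have := congrFun h (Fin.succ 0)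
        simp [v0] at this
    · obtain ⟨a, ha, rfl⟩ := Multiset.mem_map.1 hg
      obtain ⟨hval, -⟩ := ih ha
      constructor
      · intro i
        refine Fin.cases ?_ (fun j => ?_) i
        · right; simp [ext1]
        · rcases hval j with h | h <;> simp [ext1, h]
      · intro h
        have := congrFun h 0
        simp [ext1] at this

lemma toFinset_card_Sseq (n : ℕ) : (Sseq n).toFinset.card = n + 1 := by
  induction n with
  | zero => simp [Sseq]
  | succ n ih =>
    rw [Sseq_succ, Multiset.toFinset_add, Multiset.toFinset_map,
      Multiset.toFinset_replicate, if_neg (Nat.fib_pos.2 (Nat.succ_pos n)).ne']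
    have hnot : v0 n ∉ (Sseq n).toFinset.image (ext1 n) := by
      intro h
      obtain ⟨a, -, ha⟩ := Finset.mem_image.1 h
      have := congrFun ha 0
      simp [ext1, v0] at this
    rw [show ({v0 n} ∪ Finset.image (ext1 n) (Sseq n).toFinset)
        = insert (v0 n) (Finset.image (ext1 n) (Sseq n).toFinset) by
      ext x; simp]
    rw [Finset.card_insert_of_notMem hnot,
      Finset.card_image_of_injective _ (ext1_inj n), ih]

/-- `y ↦ (0, y)` as a linear map over `ℚ`. -/
def cons0Lin (n : ℕ) : (Fin (n + 1) → ℚ) →ₗ[ℚ] (Fin (n + 2) → ℚ) where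
  toFun y := Fin.cons 0 y
  map_add' a b := by
    funext i; refine Fin.cases ?_ (fun j => ?_) i <;> simp
  map_smul' c a := by
    funext i; refine Fin.cases ?_ (fun j => ?_) i <;> simp

lemma span_Sseq (n : ℕ) :
    Submodule.span ℚ
      ((fun g : Fin (n + 1) → ℤ => fun i => (g i : ℚ)) '' (↑(Sseq n).toFinset : Set (Fin (n + 1) → ℤ))) = ⊤ := by
  induction n with
  | zero =>
    rw [Submodule.eq_top_iff']
    intro x
    have hx : x = x 0 • (fun _ => (1 : ℚ)) := by
      funext i
      have hi : i = 0 := by omega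
      subst hi
      simp
    rw [hx]
    refine Submodule.smul_mem _ _ (Submodule.subset_span ?_)
    refine ⟨fun _ => 1, ?_, by funext i; simp⟩
    simp [Sseq]
  | succ n ih =>
    set C := fun g : Fin (n + 2) → ℤ => (fun i => (g i : ℚ)) with hC
    set V := Submodule.span ℚ (C '' (↑(Sseq (n + 1)).toFinset : Set (Fin (n + 2) → ℤ))) with hV
    have hmem : ∀ g ∈ Sseq (n + 1), C g ∈ V := by
      intro g hg
      exact Submodule.subset_span ⟨g, by simpa using hg, rfl⟩
    have hone : (fun _ => (1 : ℚ)) ∈ V := by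
      have hsum : C ((Sseq (n + 1)).sum) ∈ V := by
        have heq : ∀ U : Multiset (Fin (n + 2) → ℤ), C U.sum = (U.map C).sum := by
          intro U
          induction U using Multiset.induction_on with
          | empty => funext i; simp [hC]
          | cons a s ihs =>
            rw [Multiset.sum_cons, Multiset.map_cons, Multiset.sum_cons, ← ihs]
            funext i; simp [hC]
        rw [heq]
        exact V.toAddSubmonoid.multiset_sum_mem _ (by
          intro x hx
          obtain ⟨g, hg, rfl⟩ := Multiset.mem_map.1 hx
          exact hmem g hg)
      rw [sum_Sseq] at hsum
      have hfib : ((Nat.fib (n + 2) : ℚ)) ≠ 0 := by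
        exact_mod_cast (Nat.fib_pos.2 (Nat.succ_pos (n + 1))).ne'
      have heq2 : C (fun _ => (Nat.fib (n + 2) : ℤ)) =
          (Nat.fib (n + 2) : ℚ) • (fun _ => (1 : ℚ)) := by
        funext i; simp [hC]
      rw [heq2] at hsum
      have := V.smul_mem ((Nat.fib (n + 2) : ℚ))⁻¹ hsum
      rwa [smul_smul, inv_mul_cancel₀ hfib, one_smul] at this
    have hv0mem : v0 n ∈ Sseq (n + 1) := by
      rw [Sseq_succ, Multiset.mem_add]
      exact Or.inl (Multiset.mem_replicate.2 ⟨(Nat.fib_pos.2 (Nat.succ_pos n)).ne', rfl⟩)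
    have hv0 : C (v0 n) ∈ V := hmem _ hv0mem
    set E : Fin (n + 2) → ℚ := Fin.cons 1 (fun _ => 0) with hE
    have heE : E ∈ V := by
      have h : E = (fun _ => (1 : ℚ)) - C (v0 n) := by
        funext i
        refine Fin.cases ?_ (fun j => ?_) i <;> simp [hE, hC, v0]
      rw [h]
      exact sub_mem hone hv0
    have hcons : ∀ g ∈ Sseq n, (Fin.cons 0 (fun i => (g i : ℚ)) : Fin (n + 2) → ℚ) ∈ V := by
      intro g hg
      have hg' : ext1 n g ∈ Sseq (n + 1) := by
        rw [Sseq_succ, Multiset.mem_add]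
        exact Or.inr (Multiset.mem_map.2 ⟨g, hg, rfl⟩)
      have h : (Fin.cons 0 (fun i => (g i : ℚ)) : Fin (n + 2) → ℚ)
          = (fun _ => (1 : ℚ)) - C (ext1 n g) := by
        funext i
        refine Fin.cases ?_ (fun j => ?_) i <;> simp [hC, ext1]
      rw [h]
      exact sub_mem hone (hmem _ hg')
    have hrange : ∀ y : Fin (n + 1) → ℚ, (Fin.cons 0 y : Fin (n + 2) → ℚ) ∈ V := by
      have hmap : Submodule.map (cons0Lin n) ⊤ ≤ V := by
        rw [← ih, Submodule.map_span, Submodule.span_le]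
        rintro _ ⟨_, ⟨g, hg, rfl⟩, rfl⟩
        exact hcons g (by simpa using hg)
      intro y
      exact hmap ⟨y, trivial, rfl⟩
    rw [Submodule.eq_top_iff']
    intro x
    have hx : x = x 0 • E + (Fin.cons 0 (Fin.tail x) : Fin (n + 2) → ℚ) := by
      funext i
      refine Fin.cases ?_ (fun j => ?_) i <;> simp [hE, Fin.tail]
    rw [hx]
    exact add_mem (V.smul_mem _ heE) (hrange _)

lemma min_Sseq (n : ℕ) : ∀ T : Multiset (Fin (n + 1) → ℤ), T ≤ Sseq n →
    (∃ c : ℤ, T.sum = fun _ => c) → T = 0 ∨ T = Sseq n := by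
  induction n with
  | zero =>
    intro T hT _
    exact Multiset.le_singleton.1 hT
  | succ n ih =>
    intro T hT hc
    obtain ⟨c, hc⟩ := hc
    set k := Nat.fib (n + 1) with hk
    set R := Multiset.replicate k (v0 n) with hR
    set M := (Sseq n).map (ext1 n) with hM
    have hT' : T ≤ R + M := by rwa [Sseq_succ] at hT
    have hdecomp : T - R + T ∩ R = T := Multiset.sub_add_inter T R
    have hTA : T ∩ R ≤ R := Multiset.inter_le_right (s := T) (t := R)
    have hTB : T - R ≤ M :=
      Multiset.sub_le_iff_le_add.2 (le_trans hT' (le_of_eq (add_comm R M)))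
    obtain ⟨m, hmk, hTAeq⟩ := Multiset.le_replicate_iff.1 hTA
    set h := fun (x : Fin (n + 2) → ℤ) => (fun i : Fin (n + 1) => 1 - x i.succ) with hh
    have hhf : ∀ g : Fin (n + 1) → ℤ, h (ext1 n g) = g := by
      intro g; funext i; simp [hh, ext1]
    set T' := (T - R).map h with hT'def
    have hTBeq : T - R = T'.map (ext1 n) := by
      rw [hT'def, Multiset.map_map]
      have : (T - R).map (ext1 n ∘ h) = (T - R).map id := by
        apply Multiset.map_congr rfl
        intro x hx
        obtain ⟨g, -, rfl⟩ := Multiset.mem_map.1 (Multiset.mem_of_le hTB hx)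
        simp [Function.comp, hhf]
      rw [this, Multiset.map_id]
    have hT'le : T' ≤ Sseq n := by
      have h1 : T' ≤ M.map h := Multiset.map_le_map hTB
      have h2 : M.map h = Sseq n := by
        rw [hM, Multiset.map_map]
        have : (Sseq n).map (h ∘ ext1 n) = (Sseq n).map id :=
          Multiset.map_congr rfl (fun g _ => hhf g)
        rw [this, Multiset.map_id]
      rwa [h2] at h1
    have hsum : T.sum = (T'.map (ext1 n)).sum + m • v0 n := by
      rw [← hdecomp, Multiset.sum_add, hTAeq, Multiset.sum_replicate, hTBeq]
    have hcard : (Multiset.card T' : ℤ) = c := by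
      have h1 := congrFun hc 0
      rw [hsum, Pi.add_apply, sum_ext1_zero] at h1
      simpa [v0] using h1
    have hj : ∀ j : Fin (n + 1), T'.sum j = (m : ℤ) := by
      intro j
      have h1 := congrFun hc j.succ
      rw [hsum, Pi.add_apply, sum_ext1_succ] at h1
      have h2 : (m • v0 n) j.succ = (m : ℤ) := by simp [v0]
      rw [h2] at h1
      omega
    rcases ih T' hT'le ⟨m, funext hj⟩ with h0 | h1
    · left
      have hm0 : (m : ℤ) = 0 := by
        have := hj 0
        rw [h0] at this
        simpa using this.symm
      have hm0' : m = 0 := by exact_mod_cast hm0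
      have hTB0 : T - R = 0 := by
        rw [hTBeq, h0, Multiset.map_zero]
      rw [← hdecomp, hTB0, hTAeq, hm0', Multiset.replicate_zero]
      rfl
    · right
      have hmfib : (m : ℤ) = (Nat.fib (n + 1) : ℤ) := by
        have := hj 0
        rw [h1, sum_Sseq] at this
        exact this.symm
      have hmfib' : m = Nat.fib (n + 1) := by exact_mod_cast hmfib
      rw [← hdecomp, hTBeq, h1, hTAeq, hmfib', Sseq_succ]
      exact add_comm _ _

end Stmt8Aux

/-- For each `r ≥ 1` there is a sequence `S_r` over `G_r⁺` with `|S_r| = F_{r+1}`,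
`|supp S_r| = r`, `supp S_r` spanning `ℚ^r`, `σ(S_r) = F_r·(e_1 + ⋯ + e_r)`, and no
nonempty proper subsequence of `S_r` has sum in the subgroup generated by `e_1 + ⋯ + e_r`. -/
theorem stmt8 (r : ℕ) (hr : 1 ≤ r) :
    ∃ S : Multiset (Fin r → ℤ),
      (∀ g ∈ S, g ∈ hypercubePlus r) ∧
      Multiset.card S = Nat.fib (r + 1) ∧
      S.toFinset.card = r ∧
      Submodule.span ℚ
        ((fun g : Fin r → ℤ => fun i => (g i : ℚ)) '' (↑S.toFinset : Set (Fin r → ℤ))) = ⊤ ∧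
      S.sum = (fun _ => (Nat.fib r : ℤ)) ∧
      ∀ T : Multiset (Fin r → ℤ), T ≤ S → T ≠ 0 → T ≠ S →
        T.sum ∉ AddSubgroup.zmultiples ((fun _ => 1) : Fin r → ℤ) := by
  obtain ⟨n, rfl⟩ : ∃ n, r = n + 1 := ⟨r - 1, (Nat.succ_pred_eq_of_pos hr).symm⟩
  refine ⟨Stmt8Aux.Sseq n, ?_, Stmt8Aux.card_Sseq n, Stmt8Aux.toFinset_card_Sseq n,
    Stmt8Aux.span_Sseq n, Stmt8Aux.sum_Sseq n, ?_⟩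
  · intro g hg
    obtain ⟨h1, h2⟩ := Stmt8Aux.mem_Sseq hg
    exact ⟨h2, h1⟩
  · intro T hle hT0 hTS hmem
    obtain ⟨c, hc⟩ := AddSubgroup.mem_zmultiples_iff.1 hmem
    have hsum : T.sum = fun _ => c := by
      rw [← hc]; funext i; simp
    rcases Stmt8Aux.min_Sseq n T hle ⟨c, hsum⟩ with h | h
    · exact hT0 h
    · exact hTS h
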